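/- Let A be an n×n complex matrix, M an outer inverse of A (M A M = M) with ind(M) = 1, and let N := (I − P) + A P where P is the oblique projector onto im(M) along ker(M), with N invertible and M = P N⁻¹. Let U be an n×r matrix whose columns form an orthonormal basis of ker(M)^⊥, where r = rank(M). Then the r×r matrices Uᴴ N U and Uᴴ M U are both invertible and (Uᴴ M U) = (Uᴴ N U)⁻¹. -/

import Mathlib

open Matrix

private lemma tel_mul {a b c : ℕ} (A : Matrix (Fin a) (Fin b) ℂ)
    (B : Matrix (Fin b) (Fin c) ℂ) :
    Matrix.toEuclideanLin (A * B) =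
      (Matrix.toEuclideanLin A).comp (Matrix.toEuclideanLin B) := by
  apply LinearMap.ext
  intro x
  simp [Matrix.toEuclideanLin_apply, Matrix.mulVec_mulVec]

/-- For an outer inverse `M` of `A` with `ind M = 1`, `N = (I − P) + A P`
invertible with `M = P N⁻¹`, and `U` an orthonormal basis matrix of `(ker M)ᗮ`
(`r = rank M`), the compressions `Uᴴ N U` and `Uᴴ M U` are invertible and
`Uᴴ M U = (Uᴴ N U)⁻¹`. -/
theorem stmt12 {n r : ℕ}
    (A M : Matrix (Fin n) (Fin n) ℂ) (hMAM : M * A * M = M)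
    (hind : (M * M).rank = M.rank)
    (P : Matrix (Fin n) (Fin n) ℂ)
    (hP : P * P = P ∧
      LinearMap.range (Matrix.toEuclideanLin P) =
        LinearMap.range (Matrix.toEuclideanLin M) ∧
      LinearMap.ker (Matrix.toEuclideanLin P) =
        LinearMap.ker (Matrix.toEuclideanLin M))
    (N : Matrix (Fin n) (Fin n) ℂ) (hN : N = (1 - P) + A * P)
    (hNinv : IsUnit N.det) (hMN : M = P * N⁻¹)
    (hr : r = M.rank)
    (U : Matrix (Fin n) (Fin r) ℂ) (hU : Uᴴ * U = 1)
    (hUrange : LinearMap.range (Matrix.toEuclideanLin U) =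
      (LinearMap.ker (Matrix.toEuclideanLin M))ᗮ) :
    IsUnit (Uᴴ * N * U).det ∧ IsUnit (Uᴴ * M * U).det ∧
      Uᴴ * M * U = (Uᴴ * N * U)⁻¹ := by
  obtain ⟨hPP, hPrange, hPker⟩ := hP
  have hkerM : LinearMap.ker (Matrix.toEuclideanLin M) =
      (LinearMap.range (Matrix.toEuclideanLin U))ᗮ := by
    rw [hUrange, Submodule.orthogonal_orthogonal]
  -- `Uᴴ` kills vectors orthogonal to the range of `U`
  have hadj : ∀ v : EuclideanSpace ℂ (Fin n),
      v ∈ (LinearMap.range (Matrix.toEuclideanLin U))ᗮ →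
      Matrix.toEuclideanLin Uᴴ v = 0 := by
    intro v hv
    apply ext_inner_left ℂ
    intro y
    rw [Matrix.toEuclideanLin_conjTranspose_eq_adjoint,
      LinearMap.adjoint_inner_right, inner_zero_right]
    exact (Submodule.mem_orthogonal _ v).1 hv _ ⟨y, rfl⟩
  have key1 : Uᴴ * (1 - U * Uᴴ) = (0 : Matrix (Fin r) (Fin n) ℂ) := by
    rw [Matrix.mul_sub, Matrix.mul_one, ← Matrix.mul_assoc, hU, Matrix.one_mul, sub_self]
  -- Claim 1 : M * (U * Uᴴ) = M
  have claim1 : M * (U * Uᴴ) = M := by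
    have h0 : M * (1 - U * Uᴴ) = 0 := by
      apply Matrix.toEuclideanLin.injective
      apply LinearMap.ext
      intro x
      rw [tel_mul]
      have hUw : Matrix.toEuclideanLin Uᴴ (Matrix.toEuclideanLin (1 - U * Uᴴ) x) = 0 := by
        rw [← LinearMap.comp_apply, ← tel_mul, key1]
        simp
      have hw : Matrix.toEuclideanLin (1 - U * Uᴴ) x ∈
          LinearMap.ker (Matrix.toEuclideanLin M) := by
        rw [hkerM, Submodule.mem_orthogonal]
        rintro u ⟨y, rfl⟩
        rw [← LinearMap.adjoint_inner_right,
          ← Matrix.toEuclideanLin_conjTranspose_eq_adjoint, hUw, inner_zero_right]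
      simpa using hw
    rw [mul_sub, mul_one, sub_eq_zero] at h0
    exact h0.symm
  -- Claim 2 : Uᴴ * ((1 - P) * U) = 0
  have claim2 : Uᴴ * ((1 - P) * U) = (0 : Matrix (Fin r) (Fin r) ℂ) := by
    apply Matrix.toEuclideanLin.injective
    apply LinearMap.ext
    intro x
    rw [tel_mul]
    have hw : Matrix.toEuclideanLin ((1 - P) * U) x ∈
        LinearMap.ker (Matrix.toEuclideanLin P) := by
      rw [LinearMap.mem_ker, ← LinearMap.comp_apply, ← tel_mul]
      have : P * ((1 - P) * U) = 0 := by
        rw [← Matrix.mul_assoc, Matrix.mul_sub, Matrix.mul_one, hPP, sub_self,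
          Matrix.zero_mul]
      rw [this]
      simp
    rw [hPker, hkerM] at hw
    simpa using hadj _ hw
  -- M * N = P
  have hMNP : M * N = P := by
    rw [hMN, mul_assoc, Matrix.nonsing_inv_mul N hNinv, mul_one]
  -- the key identity
  have hab : (Uᴴ * M * U) * (Uᴴ * N * U) = 1 := by
    have e1 : Uᴴ * M * U * (Uᴴ * N * U) = Uᴴ * (M * (U * Uᴴ)) * (N * U) := by
      simp only [Matrix.mul_assoc]
    have e2 : Uᴴ * M * (N * U) = Uᴴ * (M * N) * U := by
      simp only [Matrix.mul_assoc]
    rw [e1, claim1, e2, hMNP]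
    have e3 : Uᴴ * ((1 - P) * U) = Uᴴ * U - Uᴴ * P * U := by
      rw [Matrix.sub_mul, Matrix.one_mul, Matrix.mul_sub, Matrix.mul_assoc]
    rw [e3] at claim2
    rw [← sub_eq_zero.mp claim2, hU]
  have hdet : IsUnit (Uᴴ * N * U).det ∧ IsUnit (Uᴴ * M * U).det := by
    have := congrArg Matrix.det hab
    rw [Matrix.det_mul, Matrix.det_one] at this
    exact ⟨IsUnit.of_mul_eq_one _ (by rw [mul_comm]; exact this),
      IsUnit.of_mul_eq_one _ this⟩
  exact ⟨hdet.1, hdet.2, (Matrix.inv_eq_left_inv hab).symm⟩
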